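/- Let Y be a locally noetherian scheme, let f : X → Y be a flat morphism which is locally of finite type, and let V be a schematically dense open subscheme of Y. Then f⁻¹(V) is a schematically dense open subscheme of X. -/

import Mathlib

open AlgebraicGeometry CategoryTheory

universe u

/-- A morphism of schemes `f : X ⟶ Y` is schematically dominant if the canonical map
`O_Y → f_* O_X` is injective, i.e. `Γ(Y, U) → Γ(X, f ⁻¹ᵁ U)` is injective for every
open `U ⊆ Y`. -/
def SchematicallyDominant {X Y : Scheme.{u}} (f : X ⟶ Y) : Prop :=
  ∀ U : Y.Opens, Function.Injective (f.app U)

/-- An open subscheme `U` of a scheme `X` is schematically dense if the open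
immersion `U ⟶ X` is schematically dominant. -/
def SchematicallyDense {X : Scheme.{u}} (U : X.Opens) : Prop :=
  SchematicallyDominant U.ι

theorem aux_ass_iff {R M : Type*} [CommRing R] [AddCommGroup M] [Module R M]
    [IsNoetherianRing R] {I : Ideal R} :
    I ∈ associatedPrimes R M ↔ I.IsPrime ∧ ∃ x : M, I = (Submodule.span R {x}).annihilator := by
  have e : ∀ x : M, (⊥ : Submodule R M).colon {x} = (Submodule.span R {x}).annihilator := by
    intro x; ext r
    rw [Submodule.mem_colon_singleton, Submodule.mem_bot, Submodule.mem_annihilator_span_singleton]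
  rw [AssociatedPrimes.mem_iff, isAssociatedPrime_iff]
  simp only [e]

section AssFinite

variable {R : Type*} [CommRing R]

theorem aux_ass_subset_union [IsNoetherianRing R] {M : Type*} [AddCommGroup M] [Module R M]
    (N : Submodule R M) :
    associatedPrimes R M ⊆ associatedPrimes R N ∪ associatedPrimes R (M ⧸ N) := by
  intro P hP0
  obtain ⟨hP, x, rfl⟩ := aux_ass_iff.mp hP0
  by_cases h : ∃ r : R, r • x ∈ N ∧ r • x ≠ 0
  · obtain ⟨r, hrN, hr0⟩ := h
    left
    refine aux_ass_iff.mpr ⟨hP, ⟨⟨r • x, hrN⟩, ?_⟩⟩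
    ext s
    simp only [Submodule.mem_annihilator_span_singleton]
    constructor
    · intro hs
      have : s • (⟨r • x, hrN⟩ : N) = ⟨0, N.zero_mem⟩ := by
        ext
        show s • (r • x) = 0
        rw [smul_comm, hs, smul_zero]
      simpa using this
    · intro hs
      have hs' : (s * r) • x = 0 := by
        have := congrArg (Subtype.val) hs
        simpa [mul_smul] using this
      have : s * r ∈ (Submodule.span R {x}).annihilator := by
        rwa [Submodule.mem_annihilator_span_singleton]
      rcases hP.mem_or_mem this with h1 | h1
      · rwa [Submodule.mem_annihilator_span_singleton] at h1
      · rw [Submodule.mem_annihilator_span_singleton] at h1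
        exact absurd h1 hr0
  · push_neg at h
    right
    refine aux_ass_iff.mpr ⟨hP, ⟨Submodule.Quotient.mk x, ?_⟩⟩
    ext s
    simp only [Submodule.mem_annihilator_span_singleton, ← Submodule.Quotient.mk_smul,
      Submodule.Quotient.mk_eq_zero]
    exact ⟨fun hs => by rw [hs]; exact N.zero_mem, fun hs => h s hs⟩

theorem aux_ass_span_singleton [IsNoetherianRing R] {M : Type*} [AddCommGroup M] [Module R M]
    (x : M) (hP : ((Submodule.span R {x}).annihilator).IsPrime) :
    associatedPrimes R (Submodule.span R {x}) ⊆ {(Submodule.span R {x}).annihilator} := by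
  intro Q hQ0
  obtain ⟨hQ, y, rfl⟩ := aux_ass_iff.mp hQ0
  obtain ⟨r, hr⟩ := Submodule.mem_span_singleton.mp y.2
  have hy : (y : M) = r • x := hr.symm
  have hrP : r ∉ (Submodule.span R {x}).annihilator := by
    intro hrmem
    rw [Submodule.mem_annihilator_span_singleton] at hrmem
    apply hQ.ne_top
    rw [Ideal.eq_top_iff_one, Submodule.mem_annihilator_span_singleton]
    have : y = 0 := by
      ext; rw [hy, hrmem]; rfl
    rw [this, one_smul]
  have key : ∀ s : R, s • y = 0 ↔ s * r ∈ (Submodule.span R {x}).annihilator := by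
    intro s
    rw [Submodule.mem_annihilator_span_singleton]
    constructor
    · intro hs
      have := congrArg (Subtype.val) hs
      simpa [hy, mul_smul] using this
    · intro hs
      ext
      show s • (y : M) = 0
      rw [hy, ← mul_smul]
      exact hs
  apply Set.mem_singleton_iff.mpr
  ext s
  rw [Submodule.mem_annihilator_span_singleton, key s]
  constructor
  · intro hs
    rcases hP.mem_or_mem hs with h1 | h1
    · exact h1
    · exact absurd h1 hrP
  · intro hs
    exact Ideal.mul_mem_right r _ hs

theorem aux_associatedPrimes_finite (R M : Type*) [CommRing R] [AddCommGroup M] [Module R M]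
    [IsNoetherianRing R] [IsNoetherian R M] : (associatedPrimes R M).Finite := by
  have key : ∀ N : Submodule R M, (associatedPrimes R (M ⧸ N)).Finite := by
    intro N
    induction N using IsNoetherian.induction with
    | hgt N IH =>
      by_cases hE : associatedPrimes R (M ⧸ N) = ∅
      · rw [hE]; exact Set.finite_empty
      · obtain ⟨P, hP0⟩ := Set.nonempty_iff_ne_empty.mpr hE
        obtain ⟨hP, xb, hPx⟩ := aux_ass_iff.mp hP0
        obtain ⟨x, rfl⟩ := Submodule.Quotient.mk_surjective N xb
        have hxN : x ∉ N := by
          intro hxN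
          apply hP.ne_top
          rw [hPx, Ideal.eq_top_iff_one, Submodule.mem_annihilator_span_singleton,
            one_smul, Submodule.Quotient.mk_eq_zero]
          exact hxN
        set N' : Submodule R M := N ⊔ Submodule.span R {x} with hN'
        have hNN' : N < N' := by
          refine lt_of_le_of_ne le_sup_left ?_
          intro hEq
          exact hxN (hEq ▸ (le_sup_right (a := N)
            (Submodule.mem_span_singleton_self x) : x ∈ N'))
        have hfin' : (associatedPrimes R (M ⧸ N')).Finite := IH N' hNN'
        set N0 : Submodule R (M ⧸ N) := (Submodule.span R {x}).map N.mkQ with hN0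
        have hmap : N0 = Submodule.span R {Submodule.Quotient.mk (p := N) x} := by
          rw [hN0, Submodule.map_span, Set.image_singleton]
          rfl
        have hiso : (associatedPrimes R ((M ⧸ N) ⧸ N0)).Finite := by
          have := LinearEquiv.AssociatedPrimes.eq
            (Submodule.quotientQuotientEquivQuotientSup N (Submodule.span R {x}))
          rw [this]
          exact hfin'
        have hsub := aux_ass_subset_union (R := R) (M := M ⧸ N) N0
        have hsing : associatedPrimes R N0 ⊆ {P} := by
          rw [hmap, hPx]
          exact aux_ass_span_singleton _ (hPx ▸ hP)
        refine Set.Finite.subset (Set.Finite.union (Set.finite_singleton P) hiso) ?_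
        intro Q hQ
        rcases hsub hQ with h1 | h1
        · exact Or.inl (hsing h1)
        · exact Or.inr h1
  have := key ⊥
  rwa [LinearEquiv.AssociatedPrimes.eq (Submodule.quotEquivOfEqBot (⊥ : Submodule R M) rfl)]
    at this

end AssFinite

theorem aux_le_associated_of_zerodivisors {R : Type*} [CommRing R] [IsNoetherianRing R]
    {p : Ideal R} (hp : p.IsPrime)
    (h : ∀ a ∈ p, ∃ x : R, x ≠ 0 ∧ a * x = 0) :
    ∃ P ∈ associatedPrimes R R, p ≤ P := by
  have hfin : (associatedPrimes R R).Finite := aux_associatedPrimes_finite R R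
  have hsub : (p : Set R) ⊆ ⋃ P ∈ hfin.toFinset, (P : Set R) := by
    intro a ha
    have : a ∈ (⋃ P ∈ associatedPrimes R R, (P : Set R)) := by
      rw [biUnion_associatedPrimes_eq_zero_divisors]
      obtain ⟨x, hx0, hax⟩ := h a ha
      exact ⟨x, hx0, by simpa [smul_eq_mul] using hax⟩
    simp only [Set.mem_iUnion, SetLike.mem_coe] at this ⊢
    obtain ⟨P, hP, haP⟩ := this
    exact ⟨P, by simpa using hP, haP⟩
  have hprime : ∀ P ∈ hfin.toFinset, P ≠ ⊥ → P ≠ ⊥ → Ideal.IsPrime (id P : Ideal R) := by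
    intro P hP _ _
    exact (hfin.mem_toFinset.mp hP).isPrime
  have := (Ideal.subset_union_prime (f := fun P : Ideal R => (id P : Ideal R))
    (⊥ : Ideal R) (⊥ : Ideal R) hprime (I := p)).mp (by simpa using hsub)
  obtain ⟨P, hP, hle⟩ := this
  exact ⟨P, hfin.mem_toFinset.mp hP, hle⟩

theorem aux_flat_nonZeroDivisors {R S : Type*} [CommRing R] [CommRing S] (f : R →+* S)
    (hf : RingHom.Flat f) {a : R} (ha : a ∈ nonZeroDivisors R) : f a ∈ nonZeroDivisors S := by
  algebraize [f]
  rw [mem_nonZeroDivisors_iff_right]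
  intro z hz
  have hz' : a • z = 0 := by
    rw [Algebra.smul_def]
    rw [mul_comm] at hz
    exact hz
  have hinj : Function.Injective (LinearMap.lsmul R R a) := by
    intro u v huv
    simp only [LinearMap.lsmul_apply, smul_eq_mul] at huv
    have h0 : (u - v) * a = 0 := by
      rw [sub_mul, mul_comm u a, mul_comm v a, huv, sub_self]
    exact sub_eq_zero.mp (mem_nonZeroDivisors_iff_right.mp ha _ h0)
  have hrT : Function.Injective ((LinearMap.lsmul R R a).rTensor S) :=
    Module.Flat.rTensor_preserves_injective_linearMap _ hinj
  have key : ∀ s : S, a • s =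
      (TensorProduct.lid R S) ((LinearMap.lsmul R R a).rTensor S
        ((TensorProduct.lid R S).symm s)) := by
    intro s
    rw [TensorProduct.lid_symm_apply, LinearMap.rTensor_tmul, TensorProduct.lid_tmul]
    simp
  have h2 : ((LinearMap.lsmul R R a).rTensor S) ((TensorProduct.lid R S).symm z) = 0 := by
    apply (TensorProduct.lid R S).injective
    rw [map_zero, ← key z, hz']
  have h3 : (TensorProduct.lid R S).symm z = 0 := by
    apply hrT
    rw [h2, map_zero]
  have := congrArg (TensorProduct.lid R S) h3
  simpa using this

theorem aux_isLocalization_nonZeroDivisors {R S : Type*} [CommRing R] [CommRing S] [Algebra R S]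
    (M : Submonoid R) [IsLocalization M S] {a : R} (ha : a ∈ nonZeroDivisors R) :
    algebraMap R S a ∈ nonZeroDivisors S := by
  rw [mem_nonZeroDivisors_iff_right]
  intro z hz
  obtain ⟨⟨r, m⟩, hrm⟩ := IsLocalization.surj M z
  have h1 : algebraMap R S (r * a) = 0 := by
    rw [map_mul, ← hrm]
    calc z * algebraMap R S (m : R) * algebraMap R S a
        = (z * algebraMap R S a) * algebraMap R S (m : R) := by ring
      _ = 0 := by rw [hz, zero_mul]
  obtain ⟨m', hm'⟩ := (IsLocalization.map_eq_zero_iff M S _).mp h1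
  have h2 : ((m' : R) * r) * a = 0 := by
    rw [mul_assoc]; exact hm'
  have h3 : (m' : R) * r = 0 := mem_nonZeroDivisors_iff_right.mp ha _ h2
  have h4 : algebraMap R S r = 0 :=
    (IsLocalization.map_eq_zero_iff M S _).mpr ⟨m', h3⟩
  have h5 : z * algebraMap R S m = 0 := by rw [hrm, h4]
  have hu := IsLocalization.map_units S m
  obtain ⟨u, hu⟩ := hu
  have : z * (u : S) = 0 := by rw [hu]; exact h5
  have := congrArg (fun t => t * ((u⁻¹ : Sˣ) : S)) this
  simpa [mul_assoc] using this

theorem aux_exists_prime {A B : Type*} [CommRing A] [CommRing B]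
    [IsNoetherianRing A] [IsNoetherianRing B] (φ : A →+* B)
    (T : Set (PrimeSpectrum A)) (hT : StableUnderGeneralization T)
    (hAss : ∀ p : PrimeSpectrum A, p.asIdeal ∈ associatedPrimes A A → p ∈ T)
    (hZD : ∀ a : A, (∃ y : B, y ≠ 0 ∧ φ a * y = 0) → ∃ x : A, x ≠ 0 ∧ a * x = 0)
    {b : B} (hb : b ≠ 0) :
    ∃ q : PrimeSpectrum B, PrimeSpectrum.comap φ q ∈ T ∧
      ∀ c : B, c * b = 0 → c ∈ q.asIdeal := by
  haveI : Nontrivial B := nontrivial_of_ne b 0 hb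
  haveI : Nontrivial (Submodule.span B {b}) := by
    refine ⟨⟨⟨b, Submodule.mem_span_singleton_self b⟩, 0, ?_⟩⟩
    intro h
    exact hb (congrArg Subtype.val h)
  obtain ⟨Q, hQ0⟩ := associatedPrimes.nonempty B (Submodule.span B {b})
  obtain ⟨hQp, m, hQm⟩ := aux_ass_iff.mp hQ0
  obtain ⟨c, hc⟩ := Submodule.mem_span_singleton.mp m.2
  have hm0 : (m : B) ≠ 0 := by
    intro h0
    apply hQp.ne_top
    rw [hQm, Ideal.eq_top_iff_one, Submodule.mem_annihilator_span_singleton]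
    ext
    show (1 : B) • (m : B) = 0
    rw [one_smul, h0]
  set q : PrimeSpectrum B := ⟨Q, hQp⟩ with hq
  have hker : ∀ c' : B, c' * b = 0 → c' ∈ Q := by
    intro c' h
    rw [hQm, Submodule.mem_annihilator_span_singleton]
    ext
    show c' • (m : B) = 0
    rw [← hc, smul_eq_mul, smul_eq_mul]
    calc c' * (c * b) = c * (c' * b) := by ring
      _ = 0 := by rw [h, mul_zero]
  have hZDp : ∀ a ∈ (PrimeSpectrum.comap φ q).asIdeal, ∃ x : A, x ≠ 0 ∧ a * x = 0 := by
    intro a ha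
    apply hZD
    refine ⟨m, hm0, ?_⟩
    have hmem : φ a ∈ Q := ha
    rw [hQm, Submodule.mem_annihilator_span_singleton] at hmem
    have := congrArg Subtype.val hmem
    simpa [smul_eq_mul] using this
  obtain ⟨P, hPmem, hle⟩ :=
    aux_le_associated_of_zerodivisors (PrimeSpectrum.comap φ q).2 hZDp
  have hPprime : P.IsPrime := hPmem.isPrime
  have hPT : (⟨P, hPprime⟩ : PrimeSpectrum A) ∈ T := hAss _ hPmem
  have hspec : (PrimeSpectrum.comap φ q) ⤳ (⟨P, hPprime⟩ : PrimeSpectrum A) :=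
    (PrimeSpectrum.le_iff_specializes _ _).mp hle
  exact ⟨q, hT hspec hPT, hker⟩

lemma aux_exists_germ_ne_zero {X : Scheme.{u}} (U : X.Opens) (s : Γ(X, U)) (hs : s ≠ 0) :
    ∃ (x : X) (hx : x ∈ U), X.presheaf.germ U x hx s ≠ 0 := by
  by_contra h
  push_neg at h
  exact hs (TopCat.Presheaf.section_ext X.sheaf U s 0
    (fun x hx => by
      show X.presheaf.germ U x hx s = X.presheaf.germ U x hx 0
      rw [h x hx, map_zero]))

lemma aux_opens_app_eq_zero_iff {X : Scheme.{u}} (W U : X.Opens) (s : Γ(X, U)) :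
    W.ι.app U s = 0 ↔ ∀ (x : X) (hx : x ∈ U), x ∈ W → X.presheaf.germ U x hx s = 0 := by
  rw [Scheme.Opens.ι_app]
  have hmem : ∀ x : X, x ∈ W.ι ''ᵁ (W.ι ⁻¹ᵁ U) ↔ x ∈ U ∧ x ∈ W := by
    intro x
    constructor
    · rintro ⟨x', hx', rfl⟩
      exact ⟨hx', x'.2⟩
    · rintro ⟨hxU, hxW⟩
      exact ⟨⟨x, hxW⟩, hxU, rfl⟩
  constructor
  · intro h x hx hxW
    have hxO : x ∈ W.ι ''ᵁ (W.ι ⁻¹ᵁ U) := (hmem x).mpr ⟨hx, hxW⟩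
    have h2 := congrArg (X.presheaf.germ (W.ι ''ᵁ (W.ι ⁻¹ᵁ U)) x hxO) h
    replace h2 := h2.trans (map_zero _)
    exact (TopCat.Presheaf.germ_res_apply X.presheaf
      (homOfLE (Set.image_preimage_subset _ _) : W.ι ''ᵁ (W.ι ⁻¹ᵁ U) ⟶ U) x hxO s).symm.trans h2
  · intro h
    apply TopCat.Presheaf.section_ext X.sheaf (W.ι ''ᵁ (W.ι ⁻¹ᵁ U))
    intro x hxO
    show X.presheaf.germ _ x hxO _ = X.presheaf.germ _ x hxO _
    obtain ⟨hxU, hxW⟩ := (hmem x).mp hxO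
    refine Eq.trans ?_ (map_zero _).symm
    exact (TopCat.Presheaf.germ_res_apply X.presheaf
      (homOfLE (Set.image_preimage_subset _ _) : W.ι ''ᵁ (W.ι ⁻¹ᵁ U) ⟶ U) x hxO s).trans
      (h x hxU hxW)

lemma aux_density {Y : Scheme.{u}} {V : Y.Opens} (hV : SchematicallyDense V)
    (UA : Y.Opens) (a : Γ(Y, UA)) (ha : a ≠ 0) :
    ∃ (y : Y) (hy : y ∈ UA), y ∈ V ∧ Y.presheaf.germ UA y hy a ≠ 0 := by
  by_contra h
  push_neg at h
  apply ha
  apply hV UA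
  rw [map_zero, aux_opens_app_eq_zero_iff]
  intro y hy hyV
  exact h y hy hyV

/-- Let `Y` be a locally noetherian scheme, `f : X ⟶ Y` a flat morphism (all stalk
maps are flat ring maps) which is locally of finite type, and `V` a schematically
dense open subscheme of `Y`. Then `f ⁻¹ᵁ V` is schematically dense in `X`. -/
theorem schematicallyDense_preimage_of_flat_of_locallyOfFiniteType
    {X Y : Scheme.{u}} (f : X ⟶ Y)
    [IsLocallyNoetherian Y]
    (hflat : ∀ x : X, RingHom.Flat (f.stalkMap x).hom)
    [LocallyOfFiniteType f]
    (V : Y.Opens) (hV : SchematicallyDense V) :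
    SchematicallyDense (f ⁻¹ᵁ V) := by
  intro U
  rw [injective_iff_map_eq_zero]
  intro s hs
  rw [aux_opens_app_eq_zero_iff] at hs
  apply TopCat.Presheaf.section_ext X.sheaf U s 0
  intro x hx
  show X.presheaf.germ U x hx s = X.presheaf.germ U x hx 0
  rw [map_zero]
  obtain ⟨UA, hUAmem, hyA, -⟩ := TopologicalSpace.Opens.isBasis_iff_nbhd.mp
    (Y.isBasis_affineOpens) (show f.base x ∈ (⊤ : Y.Opens) from trivial)
  obtain ⟨UB, hUBmem, hxB, hUBle⟩ := TopologicalSpace.Opens.isBasis_iff_nbhd.mp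
    (X.isBasis_affineOpens) (show x ∈ U ⊓ f ⁻¹ᵁ UA from ⟨hx, hyA⟩)
  have hUA : IsAffineOpen UA := hUAmem
  have hUB : IsAffineOpen UB := hUBmem
  have hUB_U : UB ≤ U := hUBle.trans inf_le_left
  have hUB_fA : UB ≤ f ⁻¹ᵁ UA := hUBle.trans inf_le_right
  set b : Γ(X, UB) := X.presheaf.map (homOfLE hUB_U).op s with hbdef
  have hb : b = 0 := by
    by_contra hb0
    haveI hA : IsNoetherianRing Γ(Y, UA) :=
      IsLocallyNoetherian.component_noetherian ⟨UA, hUA⟩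
    set φ := f.appLE UA UB hUB_fA with hφ
    have hFT : RingHom.FiniteType φ.hom :=
      HasRingHomProperty.appLE (P := @LocallyOfFiniteType) f ‹LocallyOfFiniteType f›
        ⟨UA, hUA⟩ ⟨UB, hUB⟩ hUB_fA
    haveI hBnoeth : IsNoetherianRing Γ(X, UB) := by
      letI := φ.hom.toAlgebra
      have h2 : Algebra.FiniteType Γ(Y, UA) Γ(X, UB) := hFT
      exact Algebra.FiniteType.isNoetherianRing Γ(Y, UA) Γ(X, UB)
    set T : Set (PrimeSpectrum Γ(Y, UA)) := hUA.fromSpec.base ⁻¹' (V : Set Y) with hT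
    have hTopen : IsOpen T := V.2.preimage hUA.fromSpec.base.hom.continuous
    have hTsug := hTopen.stableUnderGeneralization
    have hAss : ∀ p : PrimeSpectrum Γ(Y, UA),
        p.asIdeal ∈ associatedPrimes Γ(Y, UA) Γ(Y, UA) → p ∈ T := by
      intro p hp
      obtain ⟨hpprime, a, hpa⟩ := aux_ass_iff.mp hp
      have ha0 : a ≠ 0 := by
        intro h0
        apply hpprime.ne_top
        rw [hpa, Ideal.eq_top_iff_one, Submodule.mem_annihilator_span_singleton, h0, smul_zero]
      obtain ⟨y', hy'A, hy'V, hger⟩ := aux_density hV UA a ha0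
      set p' := hUA.primeIdealOf ⟨y', hy'A⟩ with hp'
      have hp'T : p' ∈ T := by
        show hUA.fromSpec.base p' ∈ (V : Set Y)
        rw [hp', hUA.fromSpec_primeIdealOf]
        exact hy'V
      have hlep : p ≤ p' := by
        intro cA hcA
        by_contra hcA'
        letI : Algebra Γ(Y, UA) (Y.presheaf.stalk y') :=
          TopCat.Presheaf.algebra_section_stalk Y.presheaf ⟨y', hy'A⟩
        haveI := hUA.isLocalization_stalk ⟨y', hy'A⟩
        apply hger
        have hmul : cA * a = 0 := by
          rw [hpa, Submodule.mem_annihilator_span_singleton] at hcA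
          simpa [smul_eq_mul] using hcA
        have hunit := IsLocalization.map_units (M := p'.asIdeal.primeCompl)
          (Y.presheaf.stalk y') ⟨cA, hcA'⟩
        have h0 : Y.presheaf.germ UA y' hy'A cA * Y.presheaf.germ UA y' hy'A a = 0 := by
          rw [← map_mul, hmul, map_zero]
        obtain ⟨u, hu⟩ := hunit
        have h1 : (u : Y.presheaf.stalk y') * Y.presheaf.germ UA y' hy'A a = 0 := by
          rw [hu]; exact h0
        have h2 := congrArg (fun t => ((u⁻¹ : _ˣ) : Y.presheaf.stalk y') * t) h1
        simpa [← mul_assoc] using h2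
      exact hTsug ((PrimeSpectrum.le_iff_specializes _ _).mp hlep) hp'T
    have hZD : ∀ a : Γ(Y, UA), (∃ yB : Γ(X, UB), yB ≠ 0 ∧ φ a * yB = 0) →
        ∃ xA : Γ(Y, UA), xA ≠ 0 ∧ a * xA = 0 := by
      rintro a ⟨yB, hyB0, hyBmul⟩
      by_contra hcon
      push_neg at hcon
      have haNZ : a ∈ nonZeroDivisors Γ(Y, UA) := by
        rw [mem_nonZeroDivisors_iff_right]
        intro xA hxA
        by_contra h0
        exact hcon xA h0 (by rw [mul_comm]; exact hxA)
      obtain ⟨x2, hx2B, hger2⟩ := aux_exists_germ_ne_zero UB yB hyB0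
      have hx2A : f.base x2 ∈ UA := hUB_fA hx2B
      apply hger2
      have h0 : X.presheaf.germ UB x2 hx2B (φ a) * X.presheaf.germ UB x2 hx2B yB = 0 := by
        rw [← map_mul, hyBmul, map_zero]
      have e1 : X.presheaf.germ UB x2 hx2B (φ a) =
          f.stalkMap x2 (Y.presheaf.germ UA (f.base x2) hx2A a) :=
        (TopCat.Presheaf.germ_res_apply X.presheaf
          (homOfLE hUB_fA : UB ⟶ f ⁻¹ᵁ UA) x2 hx2B (f.app UA a)).trans
          (Scheme.Hom.germ_stalkMap_apply f UA x2 hx2A a).symm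
      letI : Algebra Γ(Y, UA) (Y.presheaf.stalk (f.base x2)) :=
        TopCat.Presheaf.algebra_section_stalk Y.presheaf ⟨f.base x2, hx2A⟩
      haveI := hUA.isLocalization_stalk ⟨f.base x2, hx2A⟩
      have hgermNZ : Y.presheaf.germ UA (f.base x2) hx2A a ∈
          nonZeroDivisors (Y.presheaf.stalk (f.base x2)) :=
        aux_isLocalization_nonZeroDivisors
          (hUA.primeIdealOf ⟨f.base x2, hx2A⟩).asIdeal.primeCompl haNZ
      haveI := hflat x2
      have hNZ2 := aux_flat_nonZeroDivisors (f.stalkMap x2).hom (hflat x2) hgermNZ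
      rw [e1] at h0
      exact mem_nonZeroDivisors_iff_right.mp hNZ2 _ (by rw [mul_comm]; exact h0)
    obtain ⟨q, hqT, hq⟩ := aux_exists_prime φ.hom T hTsug hAss hZD hb0
    set xq := hUB.fromSpec.base q with hxq
    have hxqB : xq ∈ UB := by
      have h3 : xq ∈ (UB : Set X) := by
        rw [← hUB.range_fromSpec]
        exact Set.mem_range_self q
      exact h3
    have hfxqV : f.base xq ∈ V := by
      have hcomm := IsAffineOpen.SpecMap_appLE_fromSpec f hUA hUB hUB_fA
      have h1 : (Spec.map φ ≫ hUA.fromSpec).base q = (hUB.fromSpec ≫ f).base q := by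
        rw [hcomm]
      change hUA.fromSpec.base ((Spec.map φ).base q) = f.base (hUB.fromSpec.base q) at h1
      have h2 : (Spec.map φ).base q = PrimeSpectrum.comap φ.hom q := rfl
      rw [h2] at h1
      rw [← h1]
      exact hqT
    have hxqU : xq ∈ U := hUB_U hxqB
    have hgermeq : X.presheaf.germ UB xq hxqB b = 0 := by
      have hv := hs xq hxqU (show xq ∈ f ⁻¹ᵁ V from hfxqV)
      exact (TopCat.Presheaf.germ_res_apply X.presheaf (homOfLE hUB_U) xq hxqB s).trans hv
    letI : Algebra Γ(X, UB) (X.presheaf.stalk xq) :=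
      TopCat.Presheaf.algebra_section_stalk X.presheaf ⟨xq, hxqB⟩
    haveI hloc : IsLocalization q.asIdeal.primeCompl (X.presheaf.stalk xq) :=
      hUB.isLocalization_stalk' q hxqB
    obtain ⟨⟨cB, hcB⟩, hc0⟩ := (IsLocalization.map_eq_zero_iff q.asIdeal.primeCompl
      (X.presheaf.stalk xq) b).mp hgermeq
    exact hcB (hq cB hc0)
  have hfin : X.presheaf.germ UB x hxB b = 0 := by rw [hb, map_zero]
  exact (TopCat.Presheaf.germ_res_apply X.presheaf
    (homOfLE hUB_U) x hxB s).symm.trans hfin
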